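/- Let R and S be Morita equivalent rings (i.e., the categories of left R-modules and left S-modules are equivalent). Then R is left completely virtually semisimple if and only if S is left completely virtually semisimple. -/

import Mathlib

universe u v w

/-- A left `R`-module `M` is *virtually semisimple* if every submodule of `M` is
isomorphic, as an `R`-module, to a direct summand of `M`. -/
def IsVirtuallySemisimple (R : Type u) [Ring R] (M : Type v) [AddCommGroup M] [Module R M] :
    Prop :=
  ∀ N : Submodule R M, ∃ K : Submodule R M, (∃ K' : Submodule R M, IsCompl K K') ∧
    Nonempty (N ≃ₗ[R] K)

/-- A module is *completely virtually semisimple* if every submodule is virtually semisimple. -/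
def IsCompletelyVirtuallySemisimple (R : Type u) [Ring R] (M : Type v) [AddCommGroup M]
    [Module R M] : Prop :=
  ∀ N : Submodule R M, IsVirtuallySemisimple R N


section Retract

variable (R : Type u) [Ring R]

/-- `A` is a retract of `B` as `R`-modules. -/
def IsModRetract (A : Type v) (B : Type w) [AddCommGroup A] [Module R A]
    [AddCommGroup B] [Module R B] : Prop :=
  ∃ (f : A →ₗ[R] B) (g : B →ₗ[R] A), g.comp f = LinearMap.id

variable {R}

variable {A : Type*} {B : Type*} {A' : Type*} {B' : Type*}
  [AddCommGroup A] [Module R A] [AddCommGroup B] [Module R B]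
  [AddCommGroup A'] [Module R A'] [AddCommGroup B'] [Module R B']

theorem IsModRetract.congr (eA : A ≃ₗ[R] A') (eB : B ≃ₗ[R] B')
    (h : IsModRetract R A B) : IsModRetract R A' B' := by
  obtain ⟨f, g, hfg⟩ := h
  refine ⟨(eB : B →ₗ[R] B').comp (f.comp (eA.symm : A' →ₗ[R] A)),
    (eA : A →ₗ[R] A').comp (g.comp (eB.symm : B' →ₗ[R] B)), ?_⟩
  ext x
  have h1 := LinearMap.congr_fun hfg (eA.symm x)
  simp only [LinearMap.comp_apply, LinearMap.id_apply] at h1 ⊢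
  simp [h1]

theorem IsModRetract.prod (h : IsModRetract R A B) (h' : IsModRetract R A' B') :
    IsModRetract R (A × A') (B × B') := by
  obtain ⟨f, g, hfg⟩ := h
  obtain ⟨f', g', hfg'⟩ := h'
  refine ⟨f.prodMap f', g.prodMap g', LinearMap.ext fun x => ?_⟩
  have h1 := LinearMap.congr_fun hfg x.1
  have h2 := LinearMap.congr_fun hfg' x.2
  simp only [LinearMap.comp_apply, LinearMap.id_apply] at h1 h2 ⊢
  simp [LinearMap.prodMap_apply, Prod.ext_iff, h1, h2]

theorem isModRetract_of_isCompl {K K' : Submodule R B} (h : IsCompl K K')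
    (e : A ≃ₗ[R] K) : IsModRetract R A B := by
  refine ⟨K.subtype.comp (e : A →ₗ[R] K),
    (e.symm : K →ₗ[R] A).comp (K.projectionOnto K' h), ?_⟩
  ext a
  simp [Submodule.projectionOnto_apply_left]

theorem IsModRetract.exists_isCompl (h : IsModRetract R A B) :
    ∃ K K' : Submodule R B, IsCompl K K' ∧ Nonempty (A ≃ₗ[R] K) := by
  obtain ⟨f, g, hfg⟩ := h
  have hinj : Function.Injective f :=
    Function.LeftInverse.injective (g := g) (fun x => LinearMap.congr_fun hfg x)
  have hmem : ∀ x, f (g x) ∈ LinearMap.range f := fun x => ⟨g x, rfl⟩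
  set π : B →ₗ[R] LinearMap.range f := LinearMap.codRestrict _ (f.comp g) hmem with hπdef
  have hπ : ∀ x : LinearMap.range f, π x = x := by
    rintro ⟨x, a, rfl⟩
    ext
    have h1 := LinearMap.congr_fun hfg a
    simp only [LinearMap.comp_apply, LinearMap.id_apply] at h1
    simp only [hπdef, LinearMap.codRestrict_apply, LinearMap.comp_apply, h1]
  exact ⟨LinearMap.range f, LinearMap.ker π, LinearMap.isCompl_of_proj hπ,
    ⟨LinearEquiv.ofInjective f hinj⟩⟩

theorem IsModRetract.projective (h : IsModRetract R A B) [Module.Projective R B] :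
    Module.Projective R A := by
  obtain ⟨f, g, hfg⟩ := h
  exact Module.Projective.of_split f g hfg

/-- Splitting off a retraction: if `p` has a section `s` then `A ≃ B × ker p`. -/
theorem equiv_of_section (p : A →ₗ[R] B) (s : B →ₗ[R] A)
    (hs : p.comp s = LinearMap.id) : Nonempty (A ≃ₗ[R] B × ↥(LinearMap.ker p)) := by
  have hsinj : Function.Injective s :=
    Function.LeftInverse.injective (g := p) (fun x => LinearMap.congr_fun hs x)
  have hmem : ∀ x, s (p x) ∈ LinearMap.range s := fun x => ⟨p x, rfl⟩
  set π : A →ₗ[R] LinearMap.range s := LinearMap.codRestrict _ (s.comp p) hmem with hπdef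
  have hπ : ∀ x : LinearMap.range s, π x = x := by
    rintro ⟨x, b, rfl⟩
    ext
    have h1 := LinearMap.congr_fun hs b
    simp only [LinearMap.comp_apply, LinearMap.id_apply] at h1
    simp only [hπdef, LinearMap.codRestrict_apply, LinearMap.comp_apply, h1]
  have hker : LinearMap.ker π = LinearMap.ker p := by
    ext x
    constructor
    · intro hx
      have : s (p x) = 0 := by
        have := congrArg (Submodule.subtype _) hx
        simpa [hπdef] using this
      have : p x = 0 := hsinj (by simpa using this)
      simpa using this
    · intro hx
      ext
      simp only [hπdef, LinearMap.codRestrict_apply, LinearMap.comp_apply]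
      simp [LinearMap.mem_ker.mp hx]
  have hcompl : IsCompl (LinearMap.range s) (LinearMap.ker p) := by
    rw [← hker]; exact LinearMap.isCompl_of_proj hπ
  have e1 : (↥(LinearMap.range s) × ↥(LinearMap.ker p)) ≃ₗ[R] A :=
    Submodule.prodEquivOfIsCompl _ _ hcompl
  have e2 : B ≃ₗ[R] ↥(LinearMap.range s) := LinearEquiv.ofInjective s hsinj
  exact ⟨e1.symm.trans (e2.symm.prodCongr (LinearEquiv.refl R _))⟩

end Retract

section VS

variable {R : Type u} [Ring R] {M : Type v} {M' : Type w} [AddCommGroup M] [Module R M]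
  [AddCommGroup M'] [Module R M']

theorem isVirtuallySemisimple_iff_retract :
    IsVirtuallySemisimple R M ↔ ∀ N : Submodule R M, IsModRetract R N M := by
  constructor
  · intro h N
    obtain ⟨K, ⟨K', hKK'⟩, ⟨e⟩⟩ := h N
    exact isModRetract_of_isCompl hKK' e
  · intro h N
    obtain ⟨K, K', hKK', he⟩ := (h N).exists_isCompl
    exact ⟨K, ⟨K', hKK'⟩, he⟩

theorem isCompletelyVirtuallySemisimple_iff_retract :
    IsCompletelyVirtuallySemisimple R M ↔
      ∀ Q N : Submodule R M, Q ≤ N → IsModRetract R Q N := by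
  constructor
  · intro h Q N hQN
    have h1 := (isVirtuallySemisimple_iff_retract.mp (h N)) (Q.comap N.subtype)
    exact h1.congr (Submodule.comapSubtypeEquivOfLe hQN) (LinearEquiv.refl R _)
  · intro h N
    rw [isVirtuallySemisimple_iff_retract]
    intro Q'
    have hle : Submodule.map N.subtype Q' ≤ N := Submodule.map_subtype_le N Q'
    have h1 := h _ _ hle
    exact h1.congr ((Submodule.equivMapOfInjective N.subtype N.injective_subtype Q').symm)
      (LinearEquiv.refl R _)

theorem IsCompletelyVirtuallySemisimple.of_injective
    (h : IsCompletelyVirtuallySemisimple R M') (f : M →ₗ[R] M')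
    (hf : Function.Injective f) : IsCompletelyVirtuallySemisimple R M := by
  rw [isCompletelyVirtuallySemisimple_iff_retract] at h ⊢
  intro Q N hQN
  have h1 := h (Q.map f) (N.map f) (Submodule.map_mono hQN)
  exact h1.congr ((Submodule.equivMapOfInjective f hf Q).symm)
    ((Submodule.equivMapOfInjective f hf N).symm)

end VS

section ProdStep

variable {R : Type u} [Ring R] {M : Type w} [AddCommGroup M] [Module R M]

set_option maxHeartbeats 1000000 in
set_option synthInstance.maxHeartbeats 200000 in
theorem cvs_prod_step (hR : IsCompletelyVirtuallySemisimple R R)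
    (hM : IsCompletelyVirtuallySemisimple R M) :
    IsCompletelyVirtuallySemisimple R (M × R) := by
  rw [isCompletelyVirtuallySemisimple_iff_retract]
  intro Q N hQN
  set p : (M × R) →ₗ[R] R := LinearMap.snd R M R with hp
  have hRret : ∀ I : Submodule R R, IsModRetract R ↥I R := by
    intro I
    have h1 := (isCompletelyVirtuallySemisimple_iff_retract.mp hR) I ⊤ le_top
    exact h1.congr (LinearEquiv.refl R _) Submodule.topEquiv
  -- general constructions for a submodule `W` of `M × R`
  have memW : ∀ (W : Submodule R (M × R)) (x : ↥W), p ↑x ∈ Submodule.map p W :=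
    fun W x => Submodule.mem_map_of_mem x.2
  set pW : ∀ W : Submodule R (M × R), ↥W →ₗ[R] ↥(Submodule.map p W) :=
    fun W => LinearMap.codRestrict (Submodule.map p W) (p.comp W.subtype) (memW W) with hpW
  have hWsurj : ∀ W, Function.Surjective (pW W) := by
    rintro W ⟨y, x, hx, rfl⟩
    exact ⟨⟨x, hx⟩, rfl⟩
  have hkerW : ∀ W, LinearMap.ker (pW W) = Submodule.comap W.subtype (LinearMap.ker p) := by
    intro W
    rw [hpW]
    exact (LinearMap.ker_codRestrict _ _ _).trans (LinearMap.ker_comp _ _)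
  -- the kernel of `pW W` is isomorphic to a submodule of `M`
  have keq : ∀ W : Submodule R (M × R),
      Nonempty (↥(LinearMap.ker (pW W)) ≃ₗ[R]
        ↥(Submodule.map (LinearMap.fst R M R) (W ⊓ LinearMap.ker p))) := by
    intro W
    set j : ↥(LinearMap.ker (pW W)) →ₗ[R] M :=
      (LinearMap.fst R M R).comp (W.subtype.comp (LinearMap.ker (pW W)).subtype) with hj
    have hsnd : ∀ x : ↥(LinearMap.ker (pW W)), (((x : ↥W) : M × R)).2 = 0 := by
      intro x
      have hx := LinearMap.mem_ker.mp x.2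
      exact congrArg Subtype.val hx
    have hinj : Function.Injective j := by
      intro a b hab
      have h2 : ((a : ↥W) : M × R) = ((b : ↥W) : M × R) := by
        apply Prod.ext
        · exact hab
        · rw [hsnd a, hsnd b]
      exact Subtype.ext (Subtype.ext h2)
    have hrange : LinearMap.range j = Submodule.map (LinearMap.fst R M R)
        (W ⊓ LinearMap.ker p) := by
      rw [hj, LinearMap.range_comp, LinearMap.range_comp, Submodule.range_subtype,
        hkerW W, Submodule.map_comap_subtype]
    exact ⟨(LinearEquiv.ofInjective j hinj).trans (LinearEquiv.ofEq _ _ hrange)⟩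
  -- retraction between the ideal parts
  have hIret : IsModRetract R ↥(Submodule.map p Q) ↥(Submodule.map p N) :=
    (isCompletelyVirtuallySemisimple_iff_retract.mp hR) _ _ (Submodule.map_mono hQN)
  -- retraction between the kernel parts
  have hkret : IsModRetract R ↥(LinearMap.ker (pW Q)) ↥(LinearMap.ker (pW N)) := by
    have h1 := (isCompletelyVirtuallySemisimple_iff_retract.mp hM)
      (Submodule.map (LinearMap.fst R M R) (Q ⊓ LinearMap.ker p))
      (Submodule.map (LinearMap.fst R M R) (N ⊓ LinearMap.ker p))
      (Submodule.map_mono (inf_le_inf_right _ hQN))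
    exact h1.congr (keq Q).some.symm (keq N).some.symm
  -- splittings
  have hprojN : Module.Projective R ↥(Submodule.map p N) := (hRret _).projective
  have hprojQ : Module.Projective R ↥(Submodule.map p Q) := (hRret _).projective
  obtain ⟨sN, hsN⟩ := Module.projective_lifting_property (pW N) LinearMap.id (hWsurj N)
  obtain ⟨sQ, hsQ⟩ := Module.projective_lifting_property (pW Q) LinearMap.id (hWsurj Q)
  obtain ⟨eN⟩ := equiv_of_section (pW N) sN hsN
  obtain ⟨eQ⟩ := equiv_of_section (pW Q) sQ hsQ
  exact (hIret.prod hkret).congr eQ.symm eN.symm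

theorem cvs_pi (hR : IsCompletelyVirtuallySemisimple R R) (n : ℕ) :
    IsCompletelyVirtuallySemisimple R (Fin n → R) := by
  induction n with
  | zero =>
      exact hR.of_injective 0 (fun a b _ => funext fun i => i.elim0)
  | succ n ih =>
      have h1 := cvs_prod_step hR ih
      have e : (Fin (n + 1) → R) ≃ₗ[R] (Fin n → R) × R :=
        (LinearEquiv.funCongrLeft R R finSumFinEquiv).trans
          ((LinearEquiv.sumArrowLequivProdArrow (Fin n) (Fin 1) R R).trans
            ((LinearEquiv.refl R (Fin n → R)).prodCongr (LinearEquiv.funUnique (Fin 1) R R)))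
      exact h1.of_injective e.toLinearMap e.injective

theorem cvs_fun (hR : IsCompletelyVirtuallySemisimple R R) (ι : Type v) [Finite ι] :
    IsCompletelyVirtuallySemisimple R (ι → ULift.{w} R) := by
  obtain ⟨n, ⟨eι⟩⟩ := Finite.exists_equiv_fin ι
  have e : (ι → ULift.{w} R) ≃ₗ[R] (Fin n → R) :=
    (LinearEquiv.piCongrRight fun _ => ULift.moduleEquiv).trans
      (LinearEquiv.funCongrLeft R R eι.symm)
  exact (cvs_pi hR n).of_injective e.toLinearMap e.injective

end ProdStep

section CatSide

open CategoryTheory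

/-- The categorical counterpart of complete virtual semisimplicity of an object. -/
def CpredCat {C : Type*} [Category C] (X : C) : Prop :=
  ∀ (A B : C) (i : A ⟶ B) (j : B ⟶ X), Mono i → Mono j →
    ∃ (f : A ⟶ B) (g : B ⟶ A), f ≫ g = 𝟙 A

theorem cpred_of_mono {C : Type*} [Category C] {X Y : C} (m : Y ⟶ X) (hm : Mono m)
    (h : CpredCat X) : CpredCat Y := by
  intro A B i j hi hj
  haveI := hj; haveI := hm
  exact h A B i (j ≫ m) hi (mono_comp _ _)

theorem cpred_transfer {C : Type*} {D : Type*} [Category C] [Category D] (e : C ≌ D) (X : C)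
    (h : CpredCat X) : CpredCat (e.functor.obj X) := by
  intro A B i j hi hj
  haveI := hi; haveI := hj
  haveI : e.inverse.IsRightAdjoint := e.isRightAdjoint_inverse
  have hGi : Mono (e.inverse.map i) := inferInstance
  have hGj : Mono (e.inverse.map j ≫ (e.unitIso.app X).inv) := by
    haveI : Mono (e.inverse.map j) := inferInstance
    exact mono_comp _ _
  obtain ⟨f, g, hfg⟩ := h _ _ (e.inverse.map i) (e.inverse.map j ≫ (e.unitIso.app X).inv) hGi hGj
  refine ⟨(e.counitIso.app A).inv ≫ e.functor.map f ≫ (e.counitIso.app B).hom,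
    (e.counitIso.app B).inv ≫ e.functor.map g ≫ (e.counitIso.app A).hom, ?_⟩
  have hFfg : e.functor.map f ≫ e.functor.map g = 𝟙 _ := by
    rw [← e.functor.map_comp, hfg, CategoryTheory.Functor.map_id]
  simp only [Category.assoc, Iso.hom_inv_id_assoc]
  rw [← Category.assoc (e.functor.map f), hFfg, Category.id_comp, Iso.inv_hom_id]

theorem cpred_iff {R : Type u} [Ring R] {M : Type v} [AddCommGroup M] [Module R M] :
    CpredCat (ModuleCat.of R M) ↔ IsCompletelyVirtuallySemisimple R M := by
  constructor
  · intro h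
    rw [isCompletelyVirtuallySemisimple_iff_retract]
    intro Q' N' hQN
    have hi : Mono (ModuleCat.ofHom (Submodule.inclusion hQN) :
        ModuleCat.of R ↥Q' ⟶ ModuleCat.of R ↥N') := by
      rw [ModuleCat.mono_iff_injective]
      exact Submodule.inclusion_injective hQN
    have hj : Mono (ModuleCat.ofHom N'.subtype : ModuleCat.of R ↥N' ⟶ ModuleCat.of R M) := by
      rw [ModuleCat.mono_iff_injective]
      exact N'.injective_subtype
    obtain ⟨f, g, hfg⟩ := h _ _ _ _ hi hj
    exact ⟨f.hom, g.hom, by simpa using congrArg ModuleCat.Hom.hom hfg⟩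
  · intro h A B i j hi hj
    rw [ModuleCat.mono_iff_injective] at hi hj
    set k : (A : Type v) →ₗ[R] M := j.hom.comp i.hom with hk
    have hkinj : Function.Injective k := by
      intro a b hab
      exact hi (hj hab)
    have hle : LinearMap.range k ≤ LinearMap.range j.hom := by
      rw [hk, LinearMap.range_comp]
      exact LinearMap.map_le_range
    have hret := (isCompletelyVirtuallySemisimple_iff_retract.mp h) _ _ hle
    have eA : (A : Type v) ≃ₗ[R] ↥(LinearMap.range k) := LinearEquiv.ofInjective k hkinj
    have eB : (B : Type v) ≃ₗ[R] ↥(LinearMap.range j.hom) :=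
      LinearEquiv.ofInjective _ hj
    obtain ⟨f, g, hfg⟩ := hret.congr eA.symm eB.symm
    exact ⟨ModuleCat.ofHom f, ModuleCat.ofHom g, by ext x; exact LinearMap.congr_fun hfg x⟩

end CatSide

section Main

open CategoryTheory

set_option maxHeartbeats 1000000 in
theorem cvs_transfer {R : Type u} [Ring R] {S : Type v} [Ring S]
    (e : ModuleCat.{max u v} R ≌ ModuleCat.{max u v} S)
    (hR : IsCompletelyVirtuallySemisimple R R) :
    IsCompletelyVirtuallySemisimple S S := by
  classical
  set P : ModuleCat.{max u v} S := e.functor.obj (ModuleCat.of R (ULift.{v} R)) with hP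
  set SS : ModuleCat.{max u v} S := ModuleCat.of S (ULift.{u} S) with hSS
  set T : Submodule S (ULift.{u} S) :=
    ⨆ f : (P ⟶ SS), LinearMap.range (f.hom : ↥P →ₗ[S] ULift.{u} S) with hT
  -- Step A : T = ⊤
  have hT_top : T = ⊤ := by
    set a : SS ⟶ ModuleCat.of S ((ULift.{u} S) ⧸ T) := ModuleCat.ofHom T.mkQ with ha
    have haz : a = 0 := by
      apply e.inverse.map_injective
      rw [CategoryTheory.Functor.map_zero]
      refine ModuleCat.hom_ext (LinearMap.ext fun y => ?_)
      set X : ModuleCat.{max u v} R := ModuleCat.of R (ULift.{v} R) with hX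
      set hy : X ⟶ e.inverse.obj SS := ModuleCat.ofHom (
        (LinearMap.toSpanSingleton R _ y).comp
          (ULift.moduleEquiv : ULift.{v} R ≃ₗ[R] R).toLinearMap) with hhy
      set h'' : P ⟶ SS := e.functor.map hy ≫ e.counit.app SS with hh''
      have hcomp : h'' ≫ a = 0 := by
        refine ModuleCat.hom_ext (LinearMap.ext fun x => ?_)
        have hmem : h'' x ∈ T := by
          rw [hT]
          exact le_iSup (fun f : (P ⟶ SS) => LinearMap.range (f.hom : ↥P →ₗ[S] ULift.{u} S)) h''
            (LinearMap.mem_range_self _ x)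
        show T.mkQ (h''.hom x) = _
        rw [Submodule.mkQ_apply]
        rw [Submodule.Quotient.mk_eq_zero T |>.mpr hmem]
        rfl
      have hG := congrArg e.inverse.map hcomp
      rw [CategoryTheory.Functor.map_comp, CategoryTheory.Functor.map_zero] at hG
      have hGh : e.inverse.map h'' = (e.unitIso.app X).inv ≫ hy := by
        rw [hh'', CategoryTheory.Functor.map_comp]
        have hnat : (e.unitIso.app X).hom ≫ (e.functor ⋙ e.inverse).map hy
            = hy ≫ e.unit.app (e.inverse.obj SS) := (e.unit.naturality hy).symm
        have hFG : (e.functor ⋙ e.inverse).map hy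
            = (e.unitIso.app X).inv ≫ hy ≫ e.unit.app (e.inverse.obj SS) := by
          rw [← hnat, Iso.inv_hom_id_assoc]
        show (e.functor ⋙ e.inverse).map hy ≫ e.inverse.map (e.counit.app SS) = _
        rw [hFG, Category.assoc, Category.assoc, e.unit_inverse_comp, Category.comp_id]
      rw [hGh, Category.assoc] at hG
      have hzero : hy ≫ e.inverse.map a = 0 := by
        calc hy ≫ e.inverse.map a
            = (e.unitIso.app X).hom ≫ (e.unitIso.app X).inv ≫ hy ≫ e.inverse.map a := by
              rw [Iso.hom_inv_id_assoc]
          _ = (e.unitIso.app X).hom ≫ 0 := by rw [hG]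
          _ = 0 := Limits.comp_zero
      have hy1 : hy (ULift.up (1 : R)) = y := by
        show (1 : R) • y = y
        exact one_smul R y
      calc (e.inverse.map a) y = (e.inverse.map a) (hy (ULift.up (1 : R))) := by rw [hy1]
        _ = (hy ≫ e.inverse.map a) (ULift.up (1 : R)) := rfl
        _ = (0 : X ⟶ e.inverse.obj (ModuleCat.of S ((ULift.{u} S) ⧸ T))) (ULift.up (1 : R)) := by
              rw [hzero]
        _ = 0 := rfl
    -- from a = 0 conclude T = ⊤
    rw [eq_top_iff]
    intro x _
    have := LinearMap.congr_fun (congrArg ModuleCat.Hom.hom haz) x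
    rw [ha] at this
    have h0 : T.mkQ x = 0 := this
    rwa [Submodule.mkQ_apply, Submodule.Quotient.mk_eq_zero] at h0
  -- Step B : finitely many maps whose ranges generate everything
  have h1mem : (ULift.up (1 : S)) ∈ T := by rw [hT_top]; exact Submodule.mem_top
  rw [hT, Submodule.mem_iSup_iff_exists_finsupp] at h1mem
  obtain ⟨c, hcmem, hcsum⟩ := h1mem
  set V : Type (max u v) := (↥c.support → ULift.{v} R) with hV
  have hVcvs : IsCompletelyVirtuallySemisimple R V := cvs_fun hR ↥c.support
  set φ : (↥c.support → ↥P) →ₗ[S] ↥SS :=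
    ∑ f : ↥c.support, ((f : P ⟶ SS).hom : ↥P →ₗ[S] ↥SS).comp (LinearMap.proj f) with hφ
  have hφsurj : Function.Surjective φ := by
    set x0 : (↥c.support → ↥P) := fun f => (LinearMap.mem_range.mp (hcmem ↑f)).choose with hx0
    have hx0spec : ∀ f : ↥c.support, ((f : P ⟶ SS).hom : ↥P →ₗ[S] ↥SS) (x0 f) = c ↑f :=
      fun f => (LinearMap.mem_range.mp (hcmem ↑f)).choose_spec
    have hφx0 : φ x0 = ULift.up (1 : S) := by
      rw [hφ]
      simp only [LinearMap.coe_sum, Finset.sum_apply]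
      have hterm : ∀ f : ↥c.support,
          (((f : P ⟶ SS).hom : ↥P →ₗ[S] ↥SS).comp (LinearMap.proj f)) x0 = c ↑f := by
        intro f; rw [LinearMap.comp_apply]; exact hx0spec f
      rw [Finset.sum_congr rfl (fun f _ => hterm f)]
      rw [Finset.sum_coe_sort c.support (fun f => c f)]
      exact hcsum
    intro z
    refine ⟨z.down • x0, ?_⟩
    rw [map_smul, hφx0]
    exact ULift.down_injective (mul_one z.down)
  -- Step C : a section of φ
  haveI hPproj : Module.Projective S ↥SS :=
    (inferInstance : Module.Projective S (ULift.{u} S))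
  obtain ⟨σ, hσ⟩ := Module.projective_lifting_property φ LinearMap.id hφsurj
  have hσinj : Function.Injective σ := by
    intro x y hxy
    have hx := LinearMap.congr_fun hσ x
    have hy' := LinearMap.congr_fun hσ y
    simp only [LinearMap.comp_apply, LinearMap.id_apply] at hx hy'
    rw [← hx, ← hy', hxy]
  -- Step D : an injection of Wmod into F.obj (of R V)
  set FV : ModuleCat.{max u v} S := e.functor.obj (ModuleCat.of R V) with hFV
  set ι1 : ∀ _f : ↥c.support, (ModuleCat.of R (ULift.{v} R) ⟶ ModuleCat.of R V) :=
    fun f => ModuleCat.ofHom (LinearMap.single R (fun _ : ↥c.support => ULift.{v} R) f) with hι1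
  set π1 : ∀ _f : ↥c.support, (ModuleCat.of R V ⟶ ModuleCat.of R (ULift.{v} R)) :=
    fun f => ModuleCat.ofHom (LinearMap.proj (R := R) (φ := fun _ : ↥c.support => ULift.{v} R) f) with hπ1
  set ψ : (↥c.support → ↥P) →ₗ[S] ↥FV :=
    ∑ f : ↥c.support, ((e.functor.map (ι1 f)).hom : ↥P →ₗ[S] ↥FV).comp (LinearMap.proj f) with hψ
  have hcompιπ : ∀ f g : ↥c.support,
      (ι1 f ≫ π1 g) = if f = g then 𝟙 (ModuleCat.of R (ULift.{v} R)) else 0 := by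
    intro f g
    refine ModuleCat.hom_ext (LinearMap.ext fun r => ?_)
    by_cases hfg : f = g
    · subst hfg
      rw [if_pos rfl]
      exact Pi.single_eq_same (M := fun _ : ↥c.support => ULift.{v} R) f r
    · rw [if_neg hfg]
      exact Pi.single_eq_of_ne (M := fun _ : ↥c.support => ULift.{v} R) (Ne.symm hfg) r
  have hproj : ∀ (g : ↥c.support) (x : ↥c.support → ↥P),
      (e.functor.map (π1 g)).hom (ψ x) = x g := by
    intro g x
    rw [hψ, LinearMap.sum_apply, map_sum]
    have hterm : ∀ f : ↥c.support,
        (e.functor.map (π1 g)).hom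
          ((((e.functor.map (ι1 f)).hom : ↥P →ₗ[S] ↥FV)).comp (LinearMap.proj f) x)
        = if f = g then x g else 0 := by
      intro f
      by_cases hfg : f = g
      · subst hfg
        rw [if_pos rfl]
        show (e.functor.map (ι1 f) ≫ e.functor.map (π1 f)) (x f) = x f
        rw [← e.functor.map_comp, hcompιπ f f, if_pos rfl, CategoryTheory.Functor.map_id]
        rfl
      · rw [if_neg hfg]
        show (e.functor.map (ι1 f) ≫ e.functor.map (π1 g)) (x f) = 0
        rw [← e.functor.map_comp, hcompιπ f g, if_neg hfg, CategoryTheory.Functor.map_zero]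
        rfl
    rw [Finset.sum_congr rfl (fun f _ => hterm f)]
    rw [Finset.sum_ite_eq' Finset.univ g (fun _ => x g)]
    simp
  have hψinj : Function.Injective ψ := by
    intro x y hxy
    funext g
    rw [← hproj g x, ← hproj g y, hxy]
  -- Step E : a monomorphism from SS
  set m : SS ⟶ FV := ModuleCat.ofHom (ψ.comp σ : ↥SS →ₗ[S] ↥FV) with hm0
  have hmono : Mono m := (ModuleCat.mono_iff_injective m).mpr (hψinj.comp hσinj)
  -- Step F : conclude
  have hCV : CpredCat (ModuleCat.of R V) := cpred_iff.mpr hVcvs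
  have hCF : CpredCat FV := cpred_transfer e _ hCV
  have hCSS : CpredCat SS := cpred_of_mono m hmono hCF
  have hcvsU : IsCompletelyVirtuallySemisimple S (ULift.{u} S) := cpred_iff.mp hCSS
  exact hcvsU.of_injective (ULift.moduleEquiv.symm.toLinearMap)
    (ULift.moduleEquiv.symm.injective)

end Main

/-- If `R` and `S` are Morita equivalent rings (their categories of left modules are
equivalent), then `R` is left completely virtually semisimple iff `S` is. -/
theorem stmt_12 (R : Type u) [Ring R] (S : Type v) [Ring S]
    (h : Nonempty (ModuleCat.{max u v} R ≌ ModuleCat.{max u v} S)) :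
    IsCompletelyVirtuallySemisimple R R ↔ IsCompletelyVirtuallySemisimple S S := by
  obtain ⟨e⟩ := h
  exact ⟨fun hR => cvs_transfer e hR, fun hS => cvs_transfer e.symm hS⟩
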